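/- Let p₀₀, p₀₁, p₁₀, p₁₁ ∈ (0,1) with p₀₀ + p₀₁ = 1, p₁₀ + p₁₁ = 1 and p₀₁ ≠ p₁₁. Define c₀ = p₀₁/p₀₀, c₁ = p₁₁/p₁₀, and f(x) = (p₁₁ - p₀₁) · ln(1 + (c₀ - c₁)/(eˣ + c₁)). Then sup over x ∈ ℝ of f'(x) equals (√(p₀₀p₁₁) - √(p₀₁p₁₀))², and this supremum is attained at x = (1/2)(ln(p₀₁p₁₁) - ln(p₀₀p₁₀)). -/

import Mathlib

theorem stmt_6 (p₀₀ p₀₁ p₁₀ p₁₁ : ℝ)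
    (h00 : p₀₀ ∈ Set.Ioo (0:ℝ) 1) (h01 : p₀₁ ∈ Set.Ioo (0:ℝ) 1)
    (h10 : p₁₀ ∈ Set.Ioo (0:ℝ) 1) (h11 : p₁₁ ∈ Set.Ioo (0:ℝ) 1)
    (hrow0 : p₀₀ + p₀₁ = 1) (hrow1 : p₁₀ + p₁₁ = 1) (hne : p₀₁ ≠ p₁₁)
    (c₀ c₁ : ℝ) (hc₀ : c₀ = p₀₁ / p₀₀) (hc₁ : c₁ = p₁₁ / p₁₀)
    (f : ℝ → ℝ)
    (hf : f = fun x => (p₁₁ - p₀₁) * Real.log (1 + (c₀ - c₁) / (Real.exp x + c₁))) :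
    (⨆ x : ℝ, deriv f x) = (Real.sqrt (p₀₀ * p₁₁) - Real.sqrt (p₀₁ * p₁₀)) ^ 2 ∧
    deriv f ((1 / 2) * (Real.log (p₀₁ * p₁₁) - Real.log (p₀₀ * p₁₀)))
      = (Real.sqrt (p₀₀ * p₁₁) - Real.sqrt (p₀₁ * p₁₀)) ^ 2 := by
  obtain ⟨hp00, _⟩ := h00
  obtain ⟨hp01, _⟩ := h01
  obtain ⟨hp10, _⟩ := h10
  obtain ⟨hp11, _⟩ := h11
  have hc0pos : 0 < c₀ := by rw [hc₀]; positivity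
  have hc1pos : 0 < c₁ := by rw [hc₁]; positivity
  set s := Real.sqrt (p₀₀ * p₁₁) with hs
  set r := Real.sqrt (p₀₁ * p₁₀) with hr
  set q := p₀₀ * p₁₀ with hq
  have hqpos : 0 < q := by positivity
  have hs2 : s ^ 2 = p₀₀ * p₁₁ := Real.sq_sqrt (by positivity)
  have hr2 : r ^ 2 = p₀₁ * p₁₀ := Real.sq_sqrt (by positivity)
  have hspos : 0 < s := Real.sqrt_pos.mpr (by positivity)
  have hrpos : 0 < r := Real.sqrt_pos.mpr (by positivity)
  have ha : p₁₁ - p₀₁ = s ^ 2 - r ^ 2 := by rw [hs2, hr2]; nlinarith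
  -- derivative formula
  have hderiv : ∀ x : ℝ, deriv f x =
      (p₁₁ - p₀₁) * (c₁ - c₀) * Real.exp x /
        ((Real.exp x + c₀) * (Real.exp x + c₁)) := by
    intro x
    have hex : 0 < Real.exp x := Real.exp_pos x
    have hd1 : 0 < Real.exp x + c₁ := by linarith
    have hd0 : 0 < Real.exp x + c₀ := by linarith
    have h1 : HasDerivAt (fun y : ℝ => Real.exp y + c₁) (Real.exp x) x :=
      (Real.hasDerivAt_exp x).add_const c₁
    have h2 : HasDerivAt (fun y : ℝ => (Real.exp y + c₁)⁻¹)
        (-Real.exp x / (Real.exp x + c₁) ^ 2) x := h1.inv hd1.ne'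
    have h3 : HasDerivAt (fun y : ℝ => 1 + (c₀ - c₁) * (Real.exp y + c₁)⁻¹)
        ((c₀ - c₁) * (-Real.exp x / (Real.exp x + c₁) ^ 2)) x :=
      (h2.const_mul (c₀ - c₁)).const_add 1
    have he : 1 + (c₀ - c₁) * (Real.exp x + c₁)⁻¹ =
        (Real.exp x + c₀) / (Real.exp x + c₁) := by
      field_simp
      ring
    have hgpos : 0 < 1 + (c₀ - c₁) * (Real.exp x + c₁)⁻¹ := by
      rw [he]; positivity
    have h4 := (h3.log hgpos.ne').const_mul (p₁₁ - p₀₁)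
    have hfeq : f = fun y =>
        (p₁₁ - p₀₁) * Real.log (1 + (c₀ - c₁) * (Real.exp y + c₁)⁻¹) := by
      rw [hf]; funext y; rw [div_eq_mul_inv]
    rw [hfeq, h4.deriv, he]
    field_simp
    ring
  -- structural facts
  have hsum : (c₀ + c₁) * q = s ^ 2 + r ^ 2 := by
    rw [hc₀, hc₁, hq, hs2, hr2]; field_simp; ring
  have hprod : c₀ * c₁ * q ^ 2 = r ^ 2 * s ^ 2 := by
    rw [hc₀, hc₁, hq, hs2, hr2]; field_simp
  have hKq : (p₁₁ - p₀₁) * (c₁ - c₀) * q = (s ^ 2 - r ^ 2) ^ 2 := by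
    have hdd : (c₁ - c₀) * q = s ^ 2 - r ^ 2 := by
      rw [hc₀, hc₁, hq, hs2, hr2]; field_simp
    rw [mul_assoc, hdd, ha]; ring
  -- reformulated derivative
  have hform : ∀ x : ℝ, deriv f x =
      (s ^ 2 - r ^ 2) ^ 2 * (q * Real.exp x) /
        ((q * Real.exp x) ^ 2 + (s ^ 2 + r ^ 2) * (q * Real.exp x) + r ^ 2 * s ^ 2) := by
    intro x
    have hex : 0 < Real.exp x := Real.exp_pos x
    have hd1 : 0 < Real.exp x + c₁ := by linarith
    have hd0 : 0 < Real.exp x + c₀ := by linarith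
    have hD : ((Real.exp x + c₀) * (Real.exp x + c₁)) * q ^ 2 =
        (q * Real.exp x) ^ 2 + (s ^ 2 + r ^ 2) * (q * Real.exp x) + r ^ 2 * s ^ 2 := by
      linear_combination (q * Real.exp x) * hsum + hprod
    have hden : 0 < (q * Real.exp x) ^ 2 + (s ^ 2 + r ^ 2) * (q * Real.exp x)
        + r ^ 2 * s ^ 2 := by
      rw [← hD]; positivity
    rw [hderiv x, div_eq_div_iff (by positivity) hden.ne']
    linear_combination (q * Real.exp x * ((Real.exp x + c₀) * (Real.exp x + c₁))) * hKq
      - ((p₁₁ - p₀₁) * (c₁ - c₀) * Real.exp x) * hD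
  -- bound
  have hbound : ∀ x : ℝ, deriv f x ≤ (s - r) ^ 2 := by
    intro x
    rw [hform x]
    set u := q * Real.exp x with hu
    have hupos : 0 < u := by rw [hu]; positivity
    have hden : 0 < u ^ 2 + (s ^ 2 + r ^ 2) * u + r ^ 2 * s ^ 2 := by positivity
    rw [div_le_iff₀ hden]
    nlinarith [sq_nonneg ((s - r) * (u - r * s))]
  -- equality at the critical point
  set x₀ := (1 / 2) * (Real.log (p₀₁ * p₁₁) - Real.log (p₀₀ * p₁₀)) with hx0
  have hT : q * Real.exp x₀ = r * s := by
    have hA : (0:ℝ) < p₀₁ * p₁₁ := by positivity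
    have hB : (0:ℝ) < p₀₀ * p₁₀ := by positivity
    have hE : Real.exp x₀ = Real.sqrt ((p₀₁ * p₁₁) / (p₀₀ * p₁₀)) := by
      rw [hx0, show (1 / 2 : ℝ) * (Real.log (p₀₁ * p₁₁) - Real.log (p₀₀ * p₁₀))
          = Real.log (Real.sqrt ((p₀₁ * p₁₁) / (p₀₀ * p₁₀))) by
        rw [Real.log_sqrt (by positivity), Real.log_div hA.ne' hB.ne']; ring]
      exact (Real.exp_log (by positivity))
    have h1 : (q * Real.exp x₀) ^ 2 = (r * s) ^ 2 := by
      rw [hE, mul_pow, mul_pow, Real.sq_sqrt (by positivity), mul_pow, hr2, hs2]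
      field_simp
    calc q * Real.exp x₀ = Real.sqrt ((q * Real.exp x₀) ^ 2) :=
          (Real.sqrt_sq (by positivity)).symm
      _ = Real.sqrt ((r * s) ^ 2) := by rw [h1]
      _ = r * s := Real.sqrt_sq (by positivity)
  have heq : deriv f x₀ = (s - r) ^ 2 := by
    rw [hform x₀, hT]
    rw [div_eq_iff (by positivity)]
    ring
  refine ⟨le_antisymm (ciSup_le hbound) ?_, heq⟩
  have hbdd : BddAbove (Set.range fun x => deriv f x) := by
    refine ⟨(s - r) ^ 2, ?_⟩
    rintro y ⟨x, rfl⟩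
    exact hbound x
  have := le_ciSup hbdd x₀
  rwa [heq] at this
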